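/- Let X and Y be the vertex tree-shifts determined by n×n 0-1 matrices A_0, A_1 and B_0, B_1 respectively, each with essential graph representation. If Y is irreducible and there exist i_1, i_2 ∈ {0,1} such that A_0 ≥ B_{i_1} and A_1 ≥ B_{i_2} entrywise, then X is irreducible. -/
import Mathlib


/-!  Tree-shifts on the binary tree: basic definitions. -/

/-- An infinite tree over alphabet `A`: a labeling of all finite words over
`Σ = {0,1}` (encoded as `List Bool`). -/
abbrev InfTree (A : Type*) : Type _ := List Bool → A

/-- The shift map `σ_w`: `(σ_w t)_x = t_{wx}`. -/
def treeShift {A : Type*} (w : List Bool) (t : InfTree A) : InfTree A :=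
  fun x => t (w ++ x)

/-- A pattern: a labeling of a finite prefix-closed set of words. -/
structure TreePattern (A : Type*) where
  supp : Finset (List Bool)
  prefixClosed : ∀ x ∈ supp, ∀ y : List Bool, y <+: x → y ∈ supp
  label : (x : List Bool) → x ∈ supp → A

/-- The pattern `p` occurs in the tree `t` rooted at the node `x`. -/
def TreePattern.occursAt {A : Type*} (p : TreePattern A) (t : InfTree A) (x : List Bool) : Prop :=
  ∀ y (hy : y ∈ p.supp), p.label y hy = t (x ++ y)

/-- The tree-shift `X_F` defined by a set `F` of forbidden patterns. -/
def treeShiftOf {A : Type*} (F : Set (TreePattern A)) : Set (InfTree A) :=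
  { t | ∀ p ∈ F, ∀ x : List Bool, ¬ p.occursAt t x }

/-- A subset of trees is a tree-shift if it is `X_F` for some forbidden set `F`. -/
def IsTreeShift {A : Type*} (X : Set (InfTree A)) : Prop :=
  ∃ F : Set (TreePattern A), X = treeShiftOf F

/-- A tree-shift of finite type: `X_F` for some finite forbidden set `F`. -/
def IsTSFT {A : Type*} (X : Set (InfTree A)) : Prop :=
  ∃ F : Set (TreePattern A), F.Finite ∧ X = treeShiftOf F

/-- A Markov tree-shift: `X_F` for a finite forbidden set `F` consisting of 2-blocks,
i.e. patterns with support `Σ_1 = {ε, 0, 1}`. -/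
def IsMarkovTS {A : Type*} (X : Set (InfTree A)) : Prop :=
  ∃ F : Set (TreePattern A), F.Finite ∧
    (∀ p ∈ F, p.supp = ({[], [false], [true]} : Finset (List Bool))) ∧
    X = treeShiftOf F

/-- The `n`-block of `t` rooted at `x` equals `u`; an `n`-block is recorded as a function
on all words, only its values on words of length `< n` (i.e. on `Σ_{n-1}`) are relevant. -/
def blockEqAt {A : Type*} (t : InfTree A) (x : List Bool) (n : ℕ) (u : List Bool → A) : Prop :=
  ∀ y : List Bool, y.length < n → t (x ++ y) = u y

/-- `u ∈ B_n(X)` : the `n`-block `u` appears in some tree of `X`. -/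
def memBlocks {A : Type*} (X : Set (InfTree A)) (n : ℕ) (u : List Bool → A) : Prop :=
  ∃ t ∈ X, ∃ x : List Bool, blockEqAt t x n u

/-- The maximal length `|P|` of a word in a finite set of words `P`. -/
def maxLen (P : Finset (List Bool)) : ℕ := P.sup List.length

/-- `P` is a complete prefix set (CPS): it is a prefix set (no word of `P` is a prefix of
another word of `P`) and every word of length at least `|P|` has a prefix in `P`. -/
def IsCPS (P : Finset (List Bool)) : Prop :=
  (∀ p ∈ P, ∀ q ∈ P, p <+: q → p = q) ∧
  (∀ x : List Bool, maxLen P ≤ x.length → ∃ p ∈ P, p <+: x)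

/-- Irreducibility of a tree-shift: any two `n`-blocks `u, v` of `X` can be realized in a
single tree of `X`, with `u` rooted at `ε` and `v` rooted at every word of a CPS whose
words have length at least `n`. -/
def IrreducibleTS {A : Type*} (X : Set (InfTree A)) : Prop :=
  ∀ n : ℕ, 0 < n → ∀ u v : List Bool → A, memBlocks X n u → memBlocks X n v →
    ∃ t ∈ X, ∃ P : Finset (List Bool), IsCPS P ∧ (∀ x ∈ P, n ≤ x.length) ∧
      blockEqAt t [] n u ∧ ∀ x ∈ P, blockEqAt t x n v

/-- Mixing for tree-shifts: there are two CPS `P_0, P_1` connecting any two blocks, the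
choice of the CPS being governed by the last letter `w_{n-1}` of `w ∈ Σ^{n-1}`. -/
def MixingTS {A : Type*} (X : Set (InfTree A)) : Prop :=
  ∃ P0 P1 : Finset (List Bool), IsCPS P0 ∧ IsCPS P1 ∧
    ∀ n m : ℕ, 0 < n → 0 < m → ∀ u v : List Bool → A,
      memBlocks X n u → memBlocks X m v →
      ∃ t ∈ X, blockEqAt t [] n u ∧
        ∀ w : List Bool, w.length = n - 1 → ∀ b : Bool, w.getLast? = some b →
          ∀ x ∈ (if b then P1 else P0), blockEqAt t (w ++ x) m v

/-- A periodic tree: `σ_x t = t` for all `x` in some complete prefix set. -/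
def IsPeriodicTree {A : Type*} (t : InfTree A) : Prop :=
  ∃ P : Finset (List Bool), IsCPS P ∧ ∀ x ∈ P, treeShift x t = t

/-- The metric on trees: `d(t,t') = 2^{-n}` where `n` is the least length of a
disagreement, and `d(t,t') = 0` if `t = t'`. -/
noncomputable def treeDist {A : Type*} (t t' : InfTree A) : ℝ :=
  haveI := Classical.propDecidable (t = t')
  if t = t' then 0
  else (2⁻¹ : ℝ) ^ sInf { n : ℕ | ∃ x : List Bool, x.length = n ∧ t x ≠ t' x }

/-- `U` is an open subset of `X` in the topology induced by the metric `treeDist`. -/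
def IsOpenIn {A : Type*} (X U : Set (InfTree A)) : Prop :=
  U ⊆ X ∧ ∀ t ∈ U, ∃ ε : ℝ, 0 < ε ∧ ∀ t' ∈ X, treeDist t t' < ε → t' ∈ U

/-- The `m`-block of `t` rooted at `x`, as a function on `Σ_{m-1}`. -/
def blockFun {A : Type*} (m : ℕ) (t : InfTree A) (x : List Bool) :
    { y : List Bool // y.length < m } → A :=
  fun y => t (x ++ y.1)

/-- `φ` is a sliding block code on `X`: it is induced by a local `m`-block map `Φ`. -/
def IsSlidingBlockCode {A B : Type*} (X : Set (InfTree A)) (φ : InfTree A → InfTree B) : Prop :=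
  ∃ m : ℕ, 0 < m ∧ ∃ Φ : ({ y : List Bool // y.length < m } → A) → B,
    ∀ t ∈ X, ∀ x : List Bool, φ t x = Φ (blockFun m t x)

/-- `φ` is a conjugacy from `X` onto `Y`: an invertible sliding block code whose inverse
is also a sliding block code. -/
def IsConjugacy {A B : Type*} (X : Set (InfTree A)) (Y : Set (InfTree B))
    (φ : InfTree A → InfTree B) : Prop :=
  IsSlidingBlockCode X φ ∧ Set.MapsTo φ X Y ∧
    ∃ ψ : InfTree B → InfTree A, IsSlidingBlockCode Y ψ ∧ Set.MapsTo ψ Y X ∧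
      (∀ t ∈ X, ψ (φ t) = t) ∧ (∀ s ∈ Y, φ (ψ s) = s)

/-- The `m`-th higher block code `φ_m`, sending `t` to the tree of `m`-blocks of `t`. -/
def higherBlockMap {A : Type*} (m : ℕ) (t : InfTree A) :
    InfTree ({ y : List Bool // y.length < m } → A) :=
  fun x => blockFun m t x

/-- The vertex tree-shift determined by two transition matrices `A_0, A_1`. -/
def vertexTreeShift {n : ℕ} (A0 A1 : Matrix (Fin n) (Fin n) ℕ) : Set (InfTree (Fin n)) :=
  { t | ∀ x : List Bool,
      A0 (t x) (t (x ++ [false])) = 1 ∧ A1 (t x) (t (x ++ [true])) = 1 }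

/-- `A_x = A_{x_l} A_{x_{l-1}} ⋯ A_{x_1}` for a word `x = x_1 … x_l`. -/
def matWord {n : ℕ} (A0 A1 : Matrix (Fin n) (Fin n) ℕ) :
    List Bool → Matrix (Fin n) (Fin n) ℕ
  | [] => 1
  | b :: rest => matWord A0 A1 rest * (if b then A1 else A0)

/-- A 0-1 matrix. -/
def ZeroOne {n : ℕ} (M : Matrix (Fin n) (Fin n) ℕ) : Prop := ∀ i j, M i j ≤ 1

/-- The graph representation of the pair `(A_0, A_1)` is essential: every row and every
column of each matrix contains a nonzero entry. -/
def EssentialPair {n : ℕ} (A0 A1 : Matrix (Fin n) (Fin n) ℕ) : Prop :=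
  (∀ i, ∃ j, 0 < A0 i j) ∧ (∀ j, ∃ i, 0 < A0 i j) ∧
  (∀ i, ∃ j, 0 < A1 i j) ∧ (∀ j, ∃ i, 0 < A1 i j)

/-- An irreducible nonnegative matrix. -/
def MatIrreducible {n : ℕ} (A : Matrix (Fin n) (Fin n) ℕ) : Prop :=
  ∀ i j, ∃ k : ℕ, 1 ≤ k ∧ 0 < (A ^ k) i j

/-- A primitive nonnegative matrix. -/
def MatPrimitive {n : ℕ} (A : Matrix (Fin n) (Fin n) ℕ) : Prop :=
  ∃ k : ℕ, 1 ≤ k ∧ ∀ i j, 0 < (A ^ k) i j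

/-- `V_w`: the set of possible terminal states of the labeled path `w`. -/
def Vset {n : ℕ} (M : Matrix (Fin n) (Fin n) ℕ) : Set (Fin n) := { j | ∃ i, 0 < M i j }

/-- A cycle: a word `w = w_1 … w_k` with `k ≥ 2`, `w_k = w_1` and `V_w = V_{w_1}`. -/
def IsCycle {n : ℕ} (A0 A1 : Matrix (Fin n) (Fin n) ℕ) (w : List Bool) : Prop :=
  2 ≤ w.length ∧ w.getLast? = w.head? ∧
    Vset (matWord A0 A1 w) = Vset (matWord A0 A1 (w.take 1))

namespace VTSaux

lemma vts_shift_mem {n : ℕ} {A0 A1 : Matrix (Fin n) (Fin n) ℕ} {t : InfTree (Fin n)}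
    (ht : t ∈ vertexTreeShift A0 A1) (w : List Bool) :
    treeShift w t ∈ vertexTreeShift A0 A1 := by
  intro x
  have := ht (w ++ x)
  simpa [treeShift, List.append_assoc] using this

/-- Finset of words of length exactly `k`. -/
def exactLenF : ℕ → Finset (List Bool)
  | 0 => {[]}
  | k + 1 => (exactLenF k).biUnion fun l => {false :: l, true :: l}

lemma mem_exactLenF {k : ℕ} {l : List Bool} : l ∈ exactLenF k ↔ l.length = k := by
  induction k generalizing l with
  | zero => simp [exactLenF, List.length_eq_zero_iff]
  | succ k ih =>
    cases l with
    | nil => simp [exactLenF]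
    | cons b r =>
      simp only [exactLenF, Finset.mem_biUnion, Finset.mem_insert, Finset.mem_singleton,
        List.length_cons, Nat.add_left_inj]
      constructor
      · rintro ⟨l', hl', h | h⟩ <;> (cases h; exact ih.mp hl')
      · intro h
        refine ⟨r, ih.mpr h, ?_⟩
        cases b <;> simp
lemma exactLenF_nonempty (k : ℕ) : (exactLenF k).Nonempty :=
  ⟨List.replicate k false, mem_exactLenF.mpr (by simp)⟩

def uptoLenF (k : ℕ) : Finset (List Bool) := (Finset.range (k + 1)).biUnion exactLenF

lemma mem_uptoLenF {k : ℕ} {l : List Bool} : l ∈ uptoLenF k ↔ l.length ≤ k := by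
  simp only [uptoLenF, Finset.mem_biUnion, Finset.mem_range, mem_exactLenF]
  constructor
  · rintro ⟨j, hj, rfl⟩; omega
  · intro h; exact ⟨l.length, by omega, rfl⟩

lemma len_le_maxLen {P : Finset (List Bool)} {p : List Bool} (h : p ∈ P) :
    p.length ≤ maxLen P := Finset.le_sup (f := List.length) h

lemma IsCPS_nonempty {P : Finset (List Bool)} (h : IsCPS P) : P.Nonempty := by
  obtain ⟨p, hp, -⟩ := h.2 (List.replicate (maxLen P) false) (by simp)
  exact ⟨p, hp⟩

lemma prefix_snoc {q p : List Bool} {b : Bool} (h : q <+: p ++ [b]) :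
    q = p ++ [b] ∨ q <+: p := by
  obtain ⟨r, hr⟩ := h
  rcases r.eq_nil_or_concat with rfl | ⟨r', b', rfl⟩
  · left; simpa using hr
  · right
    have : (q ++ r') ++ [b'] = p ++ [b] := by simpa [List.append_assoc] using hr
    have h2 : q ++ r' = p := by
      have := congrArg List.dropLast this
      simpa [List.dropLast_concat] using this
    exact ⟨r', h2⟩

/-- Preimage of a finite word set under letterwise application of `g`. -/
def preCPS (g : Bool → Bool) (Q : Finset (List Bool)) : Finset (List Bool) :=
  (uptoLenF (maxLen Q)).filter (fun p => p.map g ∈ Q)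

lemma mem_preCPS {g : Bool → Bool} {Q : Finset (List Bool)} {p : List Bool} :
    p ∈ preCPS g Q ↔ p.map g ∈ Q := by
  simp only [preCPS, Finset.mem_filter, mem_uptoLenF, and_iff_right_iff_imp]
  intro h
  have := len_le_maxLen h
  simpa using this

lemma preCPS_isCPS {g : Bool → Bool} {Q : Finset (List Bool)} (hQ : IsCPS Q) :
    IsCPS (preCPS g Q) := by
  constructor
  · intro p hp q hq hpq
    have h1 : p.map g <+: q.map g := hpq.map g
    have h2 : p.map g = q.map g := hQ.1 _ (mem_preCPS.mp hp) _ (mem_preCPS.mp hq) h1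
    have : p.length = q.length := by
      have := congrArg List.length h2; simpa using this
    exact hpq.eq_of_length this
  · intro x hx
    set x' := x ++ List.replicate (maxLen Q) false with hx'
    have hx'len : maxLen Q ≤ x'.length := by simp [hx']
    obtain ⟨q, hq, hqpre⟩ := hQ.2 (x'.map g) (by simpa using hx'len)
    have hqtake : (x'.take q.length).map g = q := by
      rw [List.map_take]
      obtain ⟨r, hr⟩ := hqpre
      rw [← hr, List.take_left]
    have hmem : x'.take q.length ∈ preCPS g Q := mem_preCPS.mpr (by rw [hqtake]; exact hq)
    have hlen : q.length ≤ x.length := by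
      have h1 : (x'.take q.length).length ≤ maxLen (preCPS g Q) := len_le_maxLen hmem
      have h2 : q.length ≤ x'.length := by
        have := congrArg List.length hqtake
        simp at this
        omega
      have h3 : (x'.take q.length).length = q.length := by simp; omega
      omega
    refine ⟨x'.take q.length, hmem, ?_⟩
    rw [hx', List.take_append_of_le_length hlen]
    exact List.take_prefix _ _

lemma preCPS_len {g : Bool → Bool} {Q : Finset (List Bool)} {p : List Bool}
    (hp : p ∈ preCPS g Q) (hQL : ∀ q ∈ Q, 1 ≤ q.length) : 1 ≤ p.length := by
  have := hQL _ (mem_preCPS.mp hp)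
  simpa using this

/-- Glue: below any point of `P`, use `b`; elsewhere use `a`. -/
noncomputable def glue {n : ℕ} (P : Finset (List Bool)) (a b : InfTree (Fin n)) :
    InfTree (Fin n) :=
  fun p => if h : ∃ q ∈ P, q <+: p then b (p.drop (Classical.choose h).length) else a p

lemma glue_of_prefix {n : ℕ} {P : Finset (List Bool)} {a b : InfTree (Fin n)}
    (hpf : ∀ p ∈ P, ∀ q ∈ P, p <+: q → p = q)
    {q : List Bool} (hq : q ∈ P) (z : List Bool) :
    glue P a b (q ++ z) = b z := by
  have h : ∃ q' ∈ P, q' <+: q ++ z := ⟨q, hq, z, rfl⟩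
  rw [glue, dif_pos h]
  obtain ⟨hq', hpre⟩ := Classical.choose_spec h
  have hcomp := List.prefix_or_prefix_of_prefix hpre (⟨z, rfl⟩ : q <+: q ++ z)
  have heq : Classical.choose h = q := by
    rcases hcomp with h1 | h1
    · exact hpf _ hq' _ hq h1
    · exact (hpf _ hq _ hq' h1).symm
  rw [heq, List.drop_left]

lemma glue_of_not {n : ℕ} {P : Finset (List Bool)} {a b : InfTree (Fin n)}
    {p : List Bool} (h : ¬ ∃ q ∈ P, q <+: p) : glue P a b p = a p := dif_neg h

lemma glue_mem {n : ℕ} {A0 A1 : Matrix (Fin n) (Fin n) ℕ} {P : Finset (List Bool)}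
    {a b : InfTree (Fin n)}
    (ha : a ∈ vertexTreeShift A0 A1) (hb : b ∈ vertexTreeShift A0 A1)
    (hpf : ∀ p ∈ P, ∀ q ∈ P, p <+: q → p = q)
    (hbd : ∀ p ∈ P, a p = b []) :
    glue P a b ∈ vertexTreeShift A0 A1 := by
  intro x
  by_cases h : ∃ q ∈ P, q <+: x
  · obtain ⟨q, hq, z, rfl⟩ := h
    have e0 : glue P a b (q ++ z) = b z := glue_of_prefix hpf hq z
    have e1 : ∀ bit : Bool, glue P a b (q ++ z ++ [bit]) = b (z ++ [bit]) := by
      intro bit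
      rw [List.append_assoc]
      exact glue_of_prefix hpf hq (z ++ [bit])
    rw [e0, e1 false, e1 true]
    exact hb z
  · have e0 : glue P a b x = a x := glue_of_not h
    have e1 : ∀ bit : Bool, glue P a b (x ++ [bit]) = a (x ++ [bit]) := by
      intro bit
      by_cases h2 : ∃ q ∈ P, q <+: x ++ [bit]
      · obtain ⟨q, hq, hpre⟩ := h2
        rcases prefix_snoc hpre with heq | hpre'
        · have h3 : glue P a b q = b [] := by
            have := glue_of_prefix (a := a) (b := b) hpf hq ([] : List Bool)
            simpa using this
          rw [← heq, h3]
          exact (hbd _ hq).symm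
        · exact absurd ⟨q, hq, hpre'⟩ h
      · exact glue_of_not h2
    rw [e0, e1 false, e1 true]
    exact ha x

lemma exists_root_tree {n : ℕ} {B0 B1 : Matrix (Fin n) (Fin n) ℕ}
    (h0 : ZeroOne B0) (h1 : ZeroOne B1) (hess : EssentialPair B0 B1) (c : Fin n) :
    ∃ s ∈ vertexTreeShift B0 B1, s [] = c := by
  choose f0 hf0 using hess.1
  choose f1 hf1 using hess.2.2.1
  refine ⟨fun x => x.foldl (fun a b => if b then f1 a else f0 a) c, ?_, rfl⟩
  intro x
  constructor
  · simp only [List.foldl_append, List.foldl_cons, List.foldl_nil, if_neg (by simp : ¬ (false = true))]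
    exact le_antisymm (h0 _ _) (hf0 _)
  · simp only [List.foldl_append, List.foldl_cons, List.foldl_nil, if_pos rfl]
    exact le_antisymm (h1 _ _) (hf1 _)

end VTSaux
namespace VTSaux

lemma lift_mem {n : ℕ} {A0 A1 B0 B1 : Matrix (Fin n) (Fin n) ℕ}
    (hA0 : ZeroOne A0) (hA1 : ZeroOne A1) (i1 i2 : Bool)
    (hd0 : ∀ i j, (if i1 then B1 else B0) i j ≤ A0 i j)
    (hd1 : ∀ i j, (if i2 then B1 else B0) i j ≤ A1 i j)
    {s : InfTree (Fin n)} (hs : s ∈ vertexTreeShift B0 B1) :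
    (fun x => s (x.map (fun b => if b then i2 else i1))) ∈ vertexTreeShift A0 A1 := by
  have key : ∀ (i : Bool) (C : Matrix (Fin n) (Fin n) ℕ), ZeroOne C →
      (∀ a b, (if i then B1 else B0) a b ≤ C a b) → ∀ (y : List Bool),
      C (s y) (s (y ++ [i])) = 1 := by
    intro i C hC hd y
    have hb : (if i then B1 else B0) (s y) (s (y ++ [i])) = 1 := by
      cases i
      · simpa using (hs y).1
      · simpa using (hs y).2
    have h2 := hd (s y) (s (y ++ [i]))
    rw [hb] at h2
    exact le_antisymm (hC _ _) h2
  intro x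
  constructor
  · show A0 (s (x.map _)) (s ((x ++ [false]).map _)) = 1
    have e : (x ++ [false]).map (fun b => if b then i2 else i1) =
        x.map (fun b => if b then i2 else i1) ++ [i1] := by simp
    rw [e]
    exact key i1 A0 hA0 hd0 _
  · show A1 (s (x.map _)) (s ((x ++ [true]).map _)) = 1
    have e : (x ++ [true]).map (fun b => if b then i2 else i1) =
        x.map (fun b => if b then i2 else i1) ++ [i2] := by simp
    rw [e]
    exact key i2 A1 hA1 hd1 _

lemma graft_mem {n : ℕ} {A0 A1 : Matrix (Fin n) (Fin n) ℕ} {m : ℕ}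
    {a : InfTree (Fin n)} {r : Fin n → InfTree (Fin n)}
    (ha : a ∈ vertexTreeShift A0 A1) (hr : ∀ c, r c ∈ vertexTreeShift A0 A1)
    (hroot : ∀ c, r c [] = c) :
    (fun x => if m ≤ x.length then r (a (x.take m)) (x.drop m) else a x)
      ∈ vertexTreeShift A0 A1 := by
  set t : InfTree (Fin n) :=
    fun x => if m ≤ x.length then r (a (x.take m)) (x.drop m) else a x with ht
  intro x
  by_cases h1 : m ≤ x.length
  · have e0 : t x = r (a (x.take m)) (x.drop m) := if_pos h1
    have e1 : ∀ bit : Bool, t (x ++ [bit]) = r (a (x.take m)) (x.drop m ++ [bit]) := by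
      intro bit
      have h2 : t (x ++ [bit]) = r (a ((x ++ [bit]).take m)) ((x ++ [bit]).drop m) :=
        if_pos (by simp; omega)
      rw [h2, List.take_append_of_le_length h1, List.drop_append_of_le_length h1]
    rw [e0, e1 false, e1 true]
    exact hr _ (x.drop m)
  · have e0 : t x = a x := if_neg h1
    by_cases h2 : m ≤ x.length + 1
    · have e1 : ∀ bit : Bool, t (x ++ [bit]) = a (x ++ [bit]) := by
        intro bit
        have hxb : m ≤ (x ++ [bit]).length := by simp; omega
        have etake : (x ++ [bit]).take m = x ++ [bit] :=
          List.take_of_length_le (by simp; omega)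
        have edrop : (x ++ [bit]).drop m = [] :=
          List.drop_of_length_le (by simp; omega)
        calc t (x ++ [bit]) = r (a ((x ++ [bit]).take m)) ((x ++ [bit]).drop m) := if_pos hxb
          _ = r (a (x ++ [bit])) [] := by rw [etake, edrop]
          _ = a (x ++ [bit]) := hroot _
      rw [e0, e1 false, e1 true]
      exact ha x
    · have e1 : ∀ bit : Bool, t (x ++ [bit]) = a (x ++ [bit]) := by
        intro bit
        exact if_neg (by simp; omega)
      rw [e0, e1 false, e1 true]
      exact ha x

end VTSaux

/-- domination of the matrices of an irreducible vertex tree-shift yields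
irreducibility. -/
theorem vertexTreeShift_irreducible_of_dominates {n : ℕ}
    (A0 A1 B0 B1 : Matrix (Fin n) (Fin n) ℕ)
    (hA0 : ZeroOne A0) (hA1 : ZeroOne A1) (hB0 : ZeroOne B0) (hB1 : ZeroOne B1)
    (hessA : EssentialPair A0 A1) (hessB : EssentialPair B0 B1)
    (hYirr : IrreducibleTS (vertexTreeShift B0 B1))
    (hdom : ∃ i1 i2 : Bool,
      (∀ i j, (if i1 then B1 else B0) i j ≤ A0 i j) ∧
      (∀ i j, (if i2 then B1 else B0) i j ≤ A1 i j)) :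
    IrreducibleTS (vertexTreeShift A0 A1) := by
  classical
  obtain ⟨i1, i2, hd0, hd1⟩ := hdom
  intro m hm u v hu hv
  obtain ⟨tu, htu, xu, huB⟩ := hu
  obtain ⟨tv, htv, xv, hvB⟩ := hv
  have hsuX : treeShift xu tu ∈ vertexTreeShift A0 A1 := VTSaux.vts_shift_mem htu xu
  have hsvX : treeShift xv tv ∈ vertexTreeShift A0 A1 := VTSaux.vts_shift_mem htv xv
  set su := treeShift xu tu with hsu
  set sv := treeShift xv tv with hsv
  have hsu_block : ∀ y : List Bool, y.length < m → su y = u y := fun y hy => huB y hy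
  have hsv_block : ∀ y : List Bool, y.length < m → sv y = v y := fun y hy => hvB y hy
  -- connectors from every symbol to d := sv []
  have key : ∀ c : Fin n, ∃ s, s ∈ vertexTreeShift B0 B1 ∧ ∃ Qc : Finset (List Bool),
      IsCPS Qc ∧ (∀ q ∈ Qc, 1 ≤ q.length) ∧ s [] = c ∧ ∀ q ∈ Qc, s q = sv [] := by
    intro c
    obtain ⟨sc, hsc, hscr⟩ := VTSaux.exists_root_tree hB0 hB1 hessB c
    obtain ⟨sd, hsd, hsdr⟩ := VTSaux.exists_root_tree hB0 hB1 hessB (sv [])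
    have h1 : memBlocks (vertexTreeShift B0 B1) 1 (fun _ => c) := by
      refine ⟨sc, hsc, [], ?_⟩
      intro y hy
      have : y = [] := List.length_eq_zero_iff.mp (by omega)
      subst this
      simpa using hscr
    have h2 : memBlocks (vertexTreeShift B0 B1) 1 (fun _ => sv []) := by
      refine ⟨sd, hsd, [], ?_⟩
      intro y hy
      have : y = [] := List.length_eq_zero_iff.mp (by omega)
      subst this
      simpa using hsdr
    obtain ⟨s, hsY, Qc, hQcps, hQlen, hblk_c, hblk_d⟩ :=
      hYirr 1 one_pos (fun _ => c) (fun _ => sv []) h1 h2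
    refine ⟨s, hsY, Qc, hQcps, hQlen, ?_, ?_⟩
    · simpa using hblk_c [] (by norm_num)
    · intro q hq
      simpa using hblk_d q hq [] (by norm_num)
  choose S hSY Q hQcps hQlen hSroot hSd using key
  -- lifted connectors glued with copies of sv
  set g : Bool → Bool := fun b => if b then i2 else i1 with hg
  set P' : Fin n → Finset (List Bool) := fun c => VTSaux.preCPS g (Q c) with hP'
  have hP'cps : ∀ c, IsCPS (P' c) := fun c => VTSaux.preCPS_isCPS (hQcps c)
  have hP'len : ∀ c, ∀ p ∈ P' c, 1 ≤ p.length := fun c p hp =>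
    VTSaux.preCPS_len hp (hQlen c)
  set r : Fin n → InfTree (Fin n) :=
    fun c => VTSaux.glue (P' c) (fun x => S c (x.map g)) sv with hr
  have hliftS : ∀ c, (fun x => S c (x.map g)) ∈ vertexTreeShift A0 A1 := fun c =>
    VTSaux.lift_mem hA0 hA1 i1 i2 hd0 hd1 (hSY c)
  have hrX : ∀ c, r c ∈ vertexTreeShift A0 A1 := by
    intro c
    refine VTSaux.glue_mem (hliftS c) hsvX (hP'cps c).1 ?_
    intro p hp
    exact hSd c _ (VTSaux.mem_preCPS.mp hp)
  have hr_root : ∀ c, r c [] = c := by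
    intro c
    have hnot : ¬ ∃ q ∈ P' c, q <+: ([] : List Bool) := by
      rintro ⟨q, hq, hpre⟩
      have hq0 : q = [] := List.prefix_nil.mp hpre
      have := hP'len c q hq
      rw [hq0] at this
      simp at this
    have h2 := VTSaux.glue_of_not (a := fun x => S c (x.map g)) (b := sv) hnot
    exact h2.trans (by simpa using hSroot c)
  have hr_block : ∀ c, ∀ p ∈ P' c, ∀ y : List Bool, y.length < m → r c (p ++ y) = v y := by
    intro c p hp y hy
    exact (VTSaux.glue_of_prefix (b := sv) (hP'cps c).1 hp y).trans (hsv_block y hy)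
  -- the final tree
  set t : InfTree (Fin n) :=
    fun x => if m ≤ x.length then r (su (x.take m)) (x.drop m) else su x with ht
  have htX : t ∈ vertexTreeShift A0 A1 := VTSaux.graft_mem hsuX hrX hr_root
  -- the final CPS
  set P : Finset (List Bool) :=
    (VTSaux.exactLenF m).biUnion (fun w => (P' (su w)).image (fun p => w ++ p)) with hP
  have hmemP : ∀ x, x ∈ P ↔ ∃ w p, w.length = m ∧ p ∈ P' (su w) ∧ x = w ++ p := by
    intro x
    simp only [hP, Finset.mem_biUnion, Finset.mem_image, VTSaux.mem_exactLenF]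
    constructor
    · rintro ⟨w, hw, p, hp, rfl⟩; exact ⟨w, p, hw, hp, rfl⟩
    · rintro ⟨w, p, hw, hp, rfl⟩; exact ⟨w, hw, p, hp, rfl⟩
  have hPpf : ∀ p ∈ P, ∀ q ∈ P, p <+: q → p = q := by
    intro x1 hx1 x2 hx2 hpre
    obtain ⟨w1, p1, hw1, hp1, rfl⟩ := (hmemP x1).mp hx1
    obtain ⟨w2, p2, hw2, hp2, rfl⟩ := (hmemP x2).mp hx2
    obtain ⟨rr, hrr⟩ := hpre
    have e1 : (w1 ++ (p1 ++ rr)).take m = w1 := by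
      rw [List.take_append_of_le_length (by omega), List.take_of_length_le (by omega)]
    have e2 : (w2 ++ p2).take m = w2 := by
      rw [List.take_append_of_le_length (by omega), List.take_of_length_le (by omega)]
    have hww : w1 = w2 := by
      calc w1 = (w1 ++ p1 ++ rr).take m := by rw [List.append_assoc, e1]
        _ = (w2 ++ p2).take m := by rw [hrr]
        _ = w2 := e2
    subst hww
    have hpp : p1 <+: p2 :=
      (List.prefix_append_right_inj w1).mp ⟨rr, hrr⟩
    rw [(hP'cps (su w1)).1 p1 hp1 p2 hp2 hpp]
  have hKw : ∀ w : List Bool, w.length = m → m + maxLen (P' (su w)) ≤ maxLen P := by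
    intro w hw
    obtain ⟨p0, hp0, hp0sup⟩ := Finset.exists_mem_eq_sup _
      (VTSaux.IsCPS_nonempty (hP'cps (su w))) List.length
    have hmem : w ++ p0 ∈ P := (hmemP _).mpr ⟨w, p0, hw, hp0, rfl⟩
    have hlp : (w ++ p0).length ≤ maxLen P := VTSaux.len_le_maxLen hmem
    have hlp2 : w.length + p0.length ≤ maxLen P := by simpa using hlp
    have hsup : maxLen (P' (su w)) = p0.length := hp0sup
    omega
  have hPcomplete : ∀ x : List Bool, maxLen P ≤ x.length → ∃ p ∈ P, p <+: x := by
    intro x hx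
    have hm_le : m ≤ x.length := by
      have := hKw (List.replicate m false) (by simp)
      omega
    have hw : (x.take m).length = m := by simp; omega
    have hx2 : x = x.take m ++ x.drop m := (List.take_append_drop m x).symm
    have hdroplen : maxLen (P' (su (x.take m))) ≤ (x.drop m).length := by
      have := hKw (x.take m) hw
      simp only [List.length_drop]
      omega
    obtain ⟨p, hp, hppre⟩ := (hP'cps (su (x.take m))).2 (x.drop m) hdroplen
    obtain ⟨rr, hrr⟩ := hppre
    refine ⟨x.take m ++ p, (hmemP _).mpr ⟨x.take m, p, hw, hp, rfl⟩, rr, ?_⟩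
    rw [List.append_assoc, hrr, ← hx2]
  have hPlen : ∀ x ∈ P, m ≤ x.length := by
    intro x hx
    obtain ⟨w, p, hw, hp, rfl⟩ := (hmemP x).mp hx
    simp
    omega
  have hblock_u : blockEqAt t [] m u := by
    intro y hy
    have e : t ([] ++ y) = su y := by
      rw [List.nil_append, ht]
      exact if_neg (by omega)
    rw [e]
    exact hsu_block y hy
  have hblock_v : ∀ x ∈ P, blockEqAt t x m v := by
    intro x hx y hy
    obtain ⟨w, p, hw, hp, rfl⟩ := (hmemP x).mp hx
    have hlen : m ≤ (w ++ p ++ y).length := by simp; omega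
    have etake : (w ++ p ++ y).take m = w := by
      rw [List.append_assoc, List.take_append_of_le_length (by omega),
        List.take_of_length_le (by omega)]
    have edrop : (w ++ p ++ y).drop m = p ++ y := by
      rw [List.append_assoc, List.drop_append_of_le_length (by omega),
        List.drop_of_length_le (by omega), List.nil_append]
    have e : t (w ++ p ++ y) = r (su w) (p ++ y) := by
      calc t (w ++ p ++ y) = r (su ((w ++ p ++ y).take m)) ((w ++ p ++ y).drop m) :=
            if_pos hlen
        _ = r (su w) (p ++ y) := by rw [etake, edrop]
    rw [e]
    exact hr_block (su w) p hp y hy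
  exact ⟨t, htX, P, ⟨hPpf, hPcomplete⟩, hPlen, hblock_u, hblock_v⟩
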